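/- Let Θ be an MLL proof structure such that the extreme-left DR-graph S_∀ℓ(Θ) is a tree and the translation T(Θ) is defined. Then T(Θ) is a deNM-tree; in particular, the graph produced by the translation is a finite tree. -/

import Mathlib

/-! ## MLL formulas, links, proof structures, proof nets, DR-switchings -/

abbrev Occ := ℕ

/-- MLL formulas over the single atom `p`. -/
inductive MLLFormula : Type
  | pos : MLLFormula
  | neg : MLLFormula
  | tensor : MLLFormula → MLLFormula → MLLFormula
  | par : MLLFormula → MLLFormula → MLLFormula
deriving DecidableEq

/-- MLL links, given by their occurrences. -/
inductive MLLLink : Type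
  | id (c1 c2 : Occ) : MLLLink
  | tensor (l r c : Occ) : MLLLink
  | par (l r c : Occ) : MLLLink
deriving DecidableEq

def MLLLink.prems : MLLLink → List Occ
  | .id _ _ => []
  | .tensor l r _ => [l, r]
  | .par l r _ => [l, r]

def MLLLink.concs : MLLLink → List Occ
  | .id c1 c2 => [c1, c2]
  | .tensor _ _ c => [c]
  | .par _ _ c => [c]

def MLLLink.IsPar : MLLLink → Prop
  | .par _ _ _ => True
  | _ => False

/-- An MLL proof structure: a finite set of links over formula occurrences. -/
structure ProofStructure where
  links : Finset MLLLink
  form : Occ → MLLFormula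
  nodupLink : ∀ L ∈ links, (MLLLink.concs L ++ MLLLink.prems L).Nodup
  formOk : ∀ L ∈ links,
    (∀ c1 c2, L = MLLLink.id c1 c2 → form c1 = MLLFormula.pos ∧ form c2 = MLLFormula.neg) ∧
    (∀ l r c, L = MLLLink.tensor l r c → form c = MLLFormula.tensor (form l) (form r)) ∧
    (∀ l r c, L = MLLLink.par l r c → form c = MLLFormula.par (form l) (form r))
  concUnique : ∀ L1 ∈ links, ∀ L2 ∈ links, ∀ x,
    x ∈ MLLLink.concs L1 → x ∈ MLLLink.concs L2 → L1 = L2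
  premUnique : ∀ L1 ∈ links, ∀ L2 ∈ links, ∀ x,
    x ∈ MLLLink.prems L1 → x ∈ MLLLink.prems L2 → L1 = L2
  premIsConc : ∀ L ∈ links, ∀ x ∈ MLLLink.prems L, ∃ K ∈ links, K ≠ L ∧ x ∈ MLLLink.concs K

/-- The set of occurrences of a set of links. -/
def occsOf (S : Finset MLLLink) : Set Occ :=
  {x | ∃ L ∈ S, x ∈ MLLLink.concs L ∨ x ∈ MLLLink.prems L}

/-- `x` is a conclusion of the set of links `S`, i.e. a conclusion of some link of `S`
that is not a premise of any link of `S`. -/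
def IsConcOfSet (S : Finset MLLLink) (x : Occ) : Prop :=
  (∃ L ∈ S, x ∈ MLLLink.concs L) ∧ ∀ L ∈ S, x ∉ MLLLink.prems L

/-- Sequentializability: the inductive construction of MLL proof nets, mirroring
the ID, ⊗ and ⅋ rules of the MLL sequent calculus. -/
inductive Sequentializable (form : Occ → MLLFormula) : Finset MLLLink → Prop
  | id (c1 c2 : Occ) : c1 ≠ c2 → form c1 = MLLFormula.pos → form c2 = MLLFormula.neg →
      Sequentializable form {MLLLink.id c1 c2}
  | tensor (S1 S2 : Finset MLLLink) (l r c : Occ) :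
      Sequentializable form S1 → Sequentializable form S2 →
      (∀ x, x ∈ occsOf S1 → x ∉ occsOf S2) →
      IsConcOfSet S1 l → IsConcOfSet S2 r →
      c ∉ occsOf S1 → c ∉ occsOf S2 →
      form c = MLLFormula.tensor (form l) (form r) →
      Sequentializable form (insert (MLLLink.tensor l r c) (S1 ∪ S2))
  | par (S : Finset MLLLink) (l r c : Occ) :
      Sequentializable form S →
      l ≠ r → IsConcOfSet S l → IsConcOfSet S r →
      c ∉ occsOf S →
      form c = MLLFormula.par (form l) (form r) →
      Sequentializable form (insert (MLLLink.par l r c) S)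

/-- An MLL proof net is a sequentializable MLL proof structure. -/
def ProofStructure.IsProofNet (Θ : ProofStructure) : Prop :=
  Sequentializable Θ.form Θ.links

/-- The edges contributed by a link under a DR-switching `sw`
(`sw L = false` selects the left premise of a ⅋-link, `true` the right one). -/
def drStep (sw : MLLLink → Bool) (L : MLLLink) (x y : Occ) : Prop :=
  match L with
  | .id c1 c2 => x = c1 ∧ y = c2
  | .tensor l r c => (x = l ∧ y = c) ∨ (x = r ∧ y = c)
  | .par l r c => if sw (MLLLink.par l r c) = true then x = r ∧ y = c else x = l ∧ y = c

/-- The DR-graph of a proof structure under a DR-switching. -/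
def DRGraph (Θ : ProofStructure) (sw : MLLLink → Bool) : SimpleGraph Occ where
  Adj x y := x ≠ y ∧ ∃ L ∈ Θ.links, drStep sw L x y ∨ drStep sw L y x
  symm := by
    constructor
    rintro x y ⟨hxy, L, hL, h⟩
    exact ⟨hxy.symm, L, hL, h.symm⟩
  loopless := by constructor; rintro x ⟨hxx, _⟩; exact hxx rfl

def ProofStructure.occSet (Θ : ProofStructure) : Set Occ := occsOf Θ.links

/-- The extreme left DR-switching `S_∀ℓ`. -/
def extremeLeft : MLLLink → Bool := fun _ => false

/-- The extreme left DR-graph `S_∀ℓ(Θ)`. -/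
def DRGraphL (Θ : ProofStructure) : SimpleGraph Occ := DRGraph Θ extremeLeft

/-- `S_∀ℓ(Θ)` is a tree (on the vertex set of occurrences of `Θ`). -/
def DRTreeL (Θ : ProofStructure) : Prop :=
  ((DRGraphL Θ).induce Θ.occSet).IsTree

/-- Consistency of a ⅋-link with premises `l`, `r` and conclusion `c`:
the unique path in the tree `S_∀ℓ(Θ)` from `l` to `r` does not contain `c`. -/
def ParLinkConsistent (Θ : ProofStructure) (l r c : Occ) : Prop :=
  ∀ p : (DRGraphL Θ).Walk l r, p.IsPath → c ∉ p.support

/-- Every ⅋-link of `Θ` is consistent in `S_∀ℓ(Θ)`. -/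
def AllParConsistent (Θ : ProofStructure) : Prop :=
  ∀ l r c, MLLLink.par l r c ∈ Θ.links → ParLinkConsistent Θ l r c

/-- The edge relation of the directed graph `G(S_∀ℓ(Θ))` on ⅋-links:
`(L1, L2)` is an edge when the unique path in `S_∀ℓ(Θ)` between the premises of `L2`
contains the node of `L1`. -/
def deNMRel (Θ : ProofStructure) (L1 L2 : MLLLink) : Prop :=
  L1 ∈ Θ.links ∧ L2 ∈ Θ.links ∧ L1 ≠ L2 ∧
  ∃ l1 r1 c1, L1 = MLLLink.par l1 r1 c1 ∧
  ∃ l2 r2 c2, L2 = MLLLink.par l2 r2 c2 ∧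
  ∃ p : (DRGraphL Θ).Walk l2 r2, p.IsPath ∧ c1 ∈ p.support

/-- Acyclicity of a directed graph given by a relation. -/
def DirAcyclicRel {α : Type} (R : α → α → Prop) : Prop :=
  ∀ x, ¬ Relation.TransGen R x x

/-- `x` is the left premise of the ⅋-link `P` of `Θ`. -/
def leftPremOfPar (Θ : ProofStructure) (x : Occ) (P : MLLLink) : Prop :=
  P ∈ Θ.links ∧ ∃ r c, P = MLLLink.par x r c

/-- `x` is the right premise of the ⅋-link `P` of `Θ`. -/
def rightPremOfPar (Θ : ProofStructure) (x : Occ) (P : MLLLink) : Prop :=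
  P ∈ Θ.links ∧ ∃ l c, P = MLLLink.par l x c

/-- `x` is a premise of some ⅋-link of `Θ`. -/
def premOfParLink (Θ : ProofStructure) (x : Occ) : Prop :=
  ∃ P, leftPremOfPar Θ x P ∨ rightPremOfPar Θ x P

/-- `x` is a conclusion of the proof structure `Θ`. -/
def IsConcOfTheta (Θ : ProofStructure) (x : Occ) : Prop :=
  IsConcOfSet Θ.links x

/-! ## deNM-trees, the translation T(Θ), the rewriting system, and Algorithm A -/

/-- Labels `ℓ_L` and `r_L` for ⅋-links `L`. -/
inductive DLabel : Type
  | left (L : MLLLink) : DLabel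
  | right (L : MLLLink) : DLabel
deriving DecidableEq

/-- A node of a deNM-tree is either a labeled node carrying a finite label set,
or a ⅋-node labeled by a ⅋-link. -/
inductive DNodeKind : Type
  | labeled (s : Finset DLabel) : DNodeKind
  | par (L : MLLLink) : DNodeKind

/-- The raw data of a deNM-tree: a finite vertex set, a node-kind assignment,
a finite edge set, and for each ⅋-node the neighbour attached at its upper port. -/
structure PreTree where
  V : Finset ℕ
  kind : ℕ → DNodeKind
  edges : Finset (Sym2 ℕ)
  upper : ℕ → Option ℕ

/-- The underlying undirected graph of a deNM-tree. -/
def PreTree.graph (T : PreTree) : SimpleGraph ℕ where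
  Adj x y := x ≠ y ∧ s(x, y) ∈ T.edges
  symm := by
    constructor
    rintro x y ⟨hxy, he⟩
    exact ⟨hxy.symm, by rwa [Sym2.eq_swap]⟩
  loopless := by constructor; rintro x ⟨hxx, _⟩; exact hxx rfl

/-- The degree of a vertex. -/
def PreTree.degree (T : PreTree) (v : ℕ) : ℕ :=
  (T.edges.filter (fun e => v ∈ e)).card

/-- `n` is a labeled node of `T`. -/
def PreTree.IsLabeledVertex (T : PreTree) (n : ℕ) : Prop :=
  n ∈ T.V ∧ ∃ s, T.kind n = DNodeKind.labeled s

/-- `T` is a deNM-tree: a finite tree whose ⅋-nodes have degree 1 or 2 and have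
their upper port attached to a neighbour. -/
def PreTree.IsDeNMTree (T : PreTree) : Prop :=
  (∀ e ∈ T.edges, ∀ x ∈ e, x ∈ T.V) ∧
  (∀ e ∈ T.edges, ¬ e.IsDiag) ∧
  (T.graph.induce (↑T.V : Set ℕ)).IsTree ∧
  ∀ v ∈ T.V, ∀ L, T.kind v = DNodeKind.par L →
    (∃ u ∈ T.V, T.upper v = some u ∧ s(v, u) ∈ T.edges) ∧
    1 ≤ T.degree v ∧ T.degree v ≤ 2

/-- ⅋-consistency of a deNM-tree: for every ⅋-node `v` (for the ⅋-link `L`),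
the unique path between its upper-port neighbour (the left premise position)
and any labeled node carrying `r_L` (the right premise position) avoids `v`. -/
def PreTree.ParConsistentD (T : PreTree) : Prop :=
  ∀ v ∈ T.V, ∀ L, T.kind v = DNodeKind.par L →
    ∀ u, T.upper v = some u →
      ∀ w ∈ T.V, ∀ s, T.kind w = DNodeKind.labeled s → DLabel.right L ∈ s →
        ∀ p : T.graph.Walk u w, p.IsPath → v ∉ p.support

/-- The induced directed relation on ⅋-nodes of a deNM-tree:
`(v1, v2)` when the path between the two premise positions of `v2`'s ⅋-link
passes through `v1`. -/
def PreTree.dirRel (T : PreTree) (v1 v2 : ℕ) : Prop :=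
  v1 ∈ T.V ∧ v2 ∈ T.V ∧ v1 ≠ v2 ∧
  (∃ L1, T.kind v1 = DNodeKind.par L1) ∧
  ∃ L2, T.kind v2 = DNodeKind.par L2 ∧
    ∃ u, T.upper v2 = some u ∧
      ∃ w ∈ T.V, ∃ s, T.kind w = DNodeKind.labeled s ∧ DLabel.right L2 ∈ s ∧
        ∃ p : T.graph.Walk u w, p.IsPath ∧ v1 ∈ p.support

/-- Directed acyclicity of a deNM-tree. -/
def PreTree.DirAcyclicD (T : PreTree) : Prop :=
  ∀ v, ¬ Relation.TransGen T.dirRel v v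

/-! ### The translation `T(Θ)` -/

/-- A ⅋-link of `Θ` gets an auxiliary labeled node exactly when its conclusion is a
premise of another ⅋-link. -/
def hasAux (Θ : ProofStructure) (L : MLLLink) : Prop :=
  L ∈ Θ.links ∧ ∃ l r c, L = MLLLink.par l r c ∧ premOfParLink Θ c

/-- The label contributed by an occurrence `x`: `ℓ_P` if `x` is the left premise of a
⅋-link `P`, `r_P` if `x` is the right premise of `P`. -/
def labelOfOcc (Θ : ProofStructure) (x : Occ) (d : DLabel) : Prop :=
  (∃ P, leftPremOfPar Θ x P ∧ d = DLabel.left P) ∨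
  (∃ P, rightPremOfPar Θ x P ∧ d = DLabel.right P)

/-- The labels carried by the (auxiliary) labeled node of a link `K`:
those contributed by the conclusions of `K`. -/
def linkLabel (Θ : ProofStructure) (K : MLLLink) (d : DLabel) : Prop :=
  ∃ x ∈ MLLLink.concs K, labelOfOcc Θ x d

/-- The node through which the subtree translating `K` connects upwards. -/
def OutIs (Θ : ProofStructure) (main aux : MLLLink → ℕ) (K : MLLLink) (v : ℕ) : Prop :=
  (hasAux Θ K ∧ v = aux K) ∨ (¬ hasAux Θ K ∧ v = main K)

/-- The edges of the translation. -/
def EdgeSpec (Θ : ProofStructure) (main aux : MLLLink → ℕ) (u v : ℕ) : Prop :=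
  (∃ x K M, K ∈ Θ.links ∧ M ∈ Θ.links ∧ x ∈ MLLLink.concs K ∧ x ∈ MLLLink.prems M ∧
      ¬ MLLLink.IsPar M ∧ OutIs Θ main aux K u ∧ v = main M) ∨
  (∃ K l r c, K ∈ Θ.links ∧ MLLLink.par l r c ∈ Θ.links ∧ l ∈ MLLLink.concs K ∧
      OutIs Θ main aux K u ∧ v = main (MLLLink.par l r c)) ∨
  (∃ L, hasAux Θ L ∧ u = main L ∧ v = aux L)

/-- The translation `T(Θ)` is defined: `S_∀ℓ(Θ)` is a tree, no ID-link has both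
conclusions premises of ⅋-links, and no ID-link has one conclusion a conclusion of `Θ`
while the other is a premise of a ⅋-link. -/
def TransDefined (Θ : ProofStructure) : Prop :=
  DRTreeL Θ ∧
  ∀ c1 c2, MLLLink.id c1 c2 ∈ Θ.links →
    ¬(premOfParLink Θ c1 ∧ premOfParLink Θ c2) ∧
    ¬(IsConcOfTheta Θ c1 ∧ premOfParLink Θ c2) ∧
    ¬(IsConcOfTheta Θ c2 ∧ premOfParLink Θ c1)

/-- `T` is (a copy of) the deNM-tree `T(Θ)` translating `Θ`. -/
def IsTranslation (Θ : ProofStructure) (T : PreTree) : Prop :=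
  TransDefined Θ ∧
  ∃ main aux : MLLLink → ℕ,
    (∀ L1 ∈ Θ.links, ∀ L2 ∈ Θ.links, main L1 = main L2 → L1 = L2) ∧
    (∀ L1 L2, hasAux Θ L1 → hasAux Θ L2 → aux L1 = aux L2 → L1 = L2) ∧
    (∀ L1 ∈ Θ.links, ∀ L2, hasAux Θ L2 → main L1 ≠ aux L2) ∧
    (∀ v, v ∈ T.V ↔ ((∃ L ∈ Θ.links, v = main L) ∨ (∃ L, hasAux Θ L ∧ v = aux L))) ∧
    (∀ L ∈ Θ.links, ¬ MLLLink.IsPar L →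
        ∃ s, T.kind (main L) = DNodeKind.labeled s ∧ ∀ d, d ∈ s ↔ linkLabel Θ L d) ∧
    (∀ L ∈ Θ.links, MLLLink.IsPar L → T.kind (main L) = DNodeKind.par L) ∧
    (∀ L, hasAux Θ L →
        ∃ s, T.kind (aux L) = DNodeKind.labeled s ∧ ∀ d, d ∈ s ↔ linkLabel Θ L d) ∧
    (∀ l r c, MLLLink.par l r c ∈ Θ.links →
        ∀ K ∈ Θ.links, l ∈ MLLLink.concs K →
          ∀ u, OutIs Θ main aux K u → T.upper (main (MLLLink.par l r c)) = some u) ∧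
    (∀ e, e ∈ T.edges ↔
        ∃ u v, e = s(u, v) ∧ (EdgeSpec Θ main aux u v ∨ EdgeSpec Θ main aux v u))

/-! ### The rewriting system and Algorithm A -/

def replaceN (v a : ℕ) : ℕ → ℕ := fun x => if x = v then a else x

/-- Eliminate the node `v`, letting `a` absorb the remaining connections of `v`
(used by the ⅋-elimination rule). -/
def PreTree.elimAt (T : PreTree) (v a : ℕ) : PreTree where
  V := T.V.erase v
  kind := T.kind
  edges := (T.edges.image (Sym2.map (replaceN v a))).filter (fun e => ¬ e.IsDiag)
  upper := T.upper

def mergeKind (k k' : DNodeKind) : DNodeKind :=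
  match k, k' with
  | DNodeKind.labeled s, DNodeKind.labeled s' => DNodeKind.labeled (s ∪ s')
  | k, _ => k

/-- Merge the labeled node `n'` into the labeled node `a`, taking the union of the
label sets (used by the union rule). -/
def PreTree.contract (T : PreTree) (a n' : ℕ) : PreTree where
  V := T.V.erase n'
  kind := fun x => if x = a then mergeKind (T.kind a) (T.kind n') else T.kind x
  edges := (T.edges.image (Sym2.map (replaceN n' a))).filter (fun e => ¬ e.IsDiag)
  upper := fun x => (T.upper x).map (replaceN n' a)

/-- The three rewrite rules. -/
inductive RRule : Type
  | elim | union | jump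

/-- A configuration of Algorithm A: the current deNM-tree, the active (labeled)
node, and the set of ⅋-links to which the local jump rule has been applied. -/
structure Config where
  tree : PreTree
  active : ℕ
  jumped : Finset MLLLink

/-- One application of a rewrite rule at the active node. -/
inductive Step : RRule → Config → Config → Prop
  | elim (c : Config) (v : ℕ) (L : MLLLink) (s : Finset DLabel) :
      c.active ∈ c.tree.V → v ∈ c.tree.V →
      c.tree.kind c.active = DNodeKind.labeled s →
      c.tree.kind v = DNodeKind.par L →
      c.tree.upper v = some c.active →
      s(c.active, v) ∈ c.tree.edges →
      DLabel.left L ∈ s → DLabel.right L ∈ s →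
      Step RRule.elim c
        { tree := c.tree.elimAt v c.active, active := c.active, jumped := c.jumped }
  | union (c : Config) (n' : ℕ) (s s' : Finset DLabel) :
      c.active ∈ c.tree.V → n' ∈ c.tree.V → n' ≠ c.active →
      c.tree.kind c.active = DNodeKind.labeled s →
      c.tree.kind n' = DNodeKind.labeled s' →
      s(c.active, n') ∈ c.tree.edges →
      Step RRule.union c
        { tree := c.tree.contract c.active n', active := c.active, jumped := c.jumped }
  | jump (c : Config) (v m : ℕ) (L : MLLLink) (s s' : Finset DLabel) :
      c.active ∈ c.tree.V → v ∈ c.tree.V → m ∈ c.tree.V →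
      c.tree.kind c.active = DNodeKind.labeled s →
      c.tree.kind v = DNodeKind.par L →
      s(c.active, v) ∈ c.tree.edges →
      c.tree.upper v ≠ some c.active →
      c.tree.kind m = DNodeKind.labeled s' →
      DLabel.right L ∈ s' →
      L ∉ c.jumped →
      Step RRule.jump c { tree := c.tree, active := m, jumped := insert L c.jumped }

def StepAny (c c' : Config) : Prop := ∃ r, Step r c c'

/-- No rewrite rule applies. -/
def Stuck (c : Config) : Prop := ∀ r c', ¬ Step r c c'

/-- `s` is the full label set `S_full` of `Θ`. -/
def SfullSpec (Θ : ProofStructure) (s : Finset DLabel) : Prop :=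
  ∀ d, d ∈ s ↔ ∃ l r c, MLLLink.par l r c ∈ Θ.links ∧
    (d = DLabel.left (MLLLink.par l r c) ∨ d = DLabel.right (MLLLink.par l r c))

/-- The terminal tree is a single degree-0 node labeled by `S_full`. -/
def FinalYes (Θ : ProofStructure) (c : Config) : Prop :=
  c.tree.V = {c.active} ∧ c.tree.edges = ∅ ∧
  ∃ s, c.tree.kind c.active = DNodeKind.labeled s ∧ SfullSpec Θ s

/-- Algorithm A with input `Θ` outputs yes. -/
def AlgAYes (Θ : ProofStructure) : Prop :=
  TransDefined Θ ∧
  ∀ T, IsTranslation Θ T → ∀ n, T.IsLabeledVertex n →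
    ∀ c', Relation.ReflTransGen StepAny { tree := T, active := n, jumped := ∅ } c' →
      Stuck c' → FinalYes Θ c'

/-- The local jump rule is applicable (up to the double-application check) at the
active node of `c`, targeting the ⅋-link `L`. -/
def JumpReady (c : Config) (L : MLLLink) : Prop :=
  c.active ∈ c.tree.V ∧ (∃ s, c.tree.kind c.active = DNodeKind.labeled s) ∧
  ∃ v ∈ c.tree.V, c.tree.kind v = DNodeKind.par L ∧
    s(c.active, v) ∈ c.tree.edges ∧ c.tree.upper v ≠ some c.active

-- auxiliary definitions & lemmas for the translation theorem
open SimpleGraph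

/-- size measure on formulas -/
def msize : MLLFormula → ℕ
  | .pos => 0
  | .neg => 0
  | .tensor a b => msize a + msize b + 1
  | .par a b => msize a + msize b + 1

/-- a premise of a link has smaller formula than a conclusion -/
lemma prem_size (Θ : ProofStructure) {L : MLLLink} (hL : L ∈ Θ.links) {x c : Occ}
    (hx : x ∈ L.prems) (hc : c ∈ L.concs) : msize (Θ.form x) < msize (Θ.form c) := by
  have hok := Θ.formOk L hL
  cases L with
  | id c1 c2 => simp [MLLLink.prems] at hx
  | tensor l r cc =>
    simp only [MLLLink.prems, MLLLink.concs, List.mem_cons, List.mem_singleton,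
      List.not_mem_nil, or_false] at hx hc
    rw [hc]
    have h := hok.2.1 l r cc rfl
    rw [h]
    rcases hx with rfl | rfl <;> simp [msize] <;> omega
  | par l r cc =>
    simp only [MLLLink.prems, MLLLink.concs, List.mem_cons, List.mem_singleton,
      List.not_mem_nil, or_false] at hx hc
    rw [hc]
    have h := hok.2.2 l r cc rfl
    rw [h]
    rcases hx with rfl | rfl <;> simp [msize] <;> omega

/-- a conclusion of a link is never also one of its premises -/
lemma conc_not_prem (Θ : ProofStructure) {L : MLLLink} (hL : L ∈ Θ.links) {x : Occ}
    (hc : x ∈ L.concs) (hp : x ∈ L.prems) : False := by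
  have h := Θ.nodupLink L hL
  rw [List.nodup_append] at h
  exact h.2.2 x hc x hp rfl

/-- links feeding each other is impossible -/
lemma no_mutual_feed (Θ : ProofStructure) {K M : MLLLink} (hK : K ∈ Θ.links)
    (hM : M ∈ Θ.links) {a b : Occ} (hac : a ∈ K.concs) (hap : a ∈ M.prems)
    (hbc : b ∈ M.concs) (hbp : b ∈ K.prems) : False := by
  have h1 := prem_size Θ hM hap hbc
  have h2 := prem_size Θ hK hbp hac
  omega

/-- the DR-step edges of one link -/
def stepE : MLLLink → Finset (Sym2 ℕ)
  | .id c1 c2 => {s(c1, c2)}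
  | .tensor l r c => {s(l, c), s(r, c)}
  | .par l r c => {s(l, c)}

/-- the "relevant premises" of a link for the translation edges -/
def relPrems : MLLLink → List ℕ
  | .id _ _ => []
  | .tensor l r _ => [l, r]
  | .par l _ _ => [l]

lemma stepE_mem (Θ : ProofStructure) {L : MLLLink} (hL : L ∈ Θ.links) {e : Sym2 ℕ}
    (he : e ∈ stepE L) :
    ∃ a b : Occ, e = s(a, b) ∧ b ∈ L.concs ∧ (a ∈ L.concs ∨ a ∈ L.prems) := by
  cases L with
  | id c1 c2 =>
    simp only [stepE, Finset.mem_singleton] at he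
    exact ⟨c1, c2, he, by simp [MLLLink.concs], Or.inl (by simp [MLLLink.concs])⟩
  | tensor l r c =>
    simp only [stepE, Finset.mem_insert, Finset.mem_singleton] at he
    rcases he with rfl | rfl
    · exact ⟨l, c, rfl, by simp [MLLLink.concs], Or.inr (by simp [MLLLink.prems])⟩
    · exact ⟨r, c, rfl, by simp [MLLLink.concs], Or.inr (by simp [MLLLink.prems])⟩
  | par l r c =>
    simp only [stepE, Finset.mem_singleton] at he
    exact ⟨l, c, he, by simp [MLLLink.concs], Or.inr (by simp [MLLLink.prems])⟩

lemma stepE_disjoint (Θ : ProofStructure) {K M : MLLLink} (hK : K ∈ Θ.links)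
    (hM : M ∈ Θ.links) (hne : K ≠ M) : Disjoint (stepE K) (stepE M) := by
  rw [Finset.disjoint_left]
  intro e heK heM
  obtain ⟨a, b, rfl, hbc, ha⟩ := stepE_mem Θ hK heK
  obtain ⟨a', b', heq, hbc', ha'⟩ := stepE_mem Θ hM heM
  rw [Sym2.eq_iff] at heq
  rcases heq with ⟨rfl, rfl⟩ | ⟨rfl, rfl⟩
  · exact hne (Θ.concUnique K hK M hM b hbc hbc')
  · -- a = b', b = a'
    rcases ha' with hbcM | hbpM
    · exact hne (Θ.concUnique K hK M hM b hbc hbcM)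
    · rcases ha with hbc'K | hbp'K
      · exact hne (Θ.concUnique K hK M hM a hbc'K hbc')
      · exact no_mutual_feed Θ hK hM hbc hbpM hbc' hbp'K

lemma reach_del {V : Type*} {G : SimpleGraph V} {v w : V}
    (hr : (G.deleteEdges {s(v,w)}).Reachable v w) :
    ∀ {a b : V}, G.Reachable a b → (G.deleteEdges {s(v,w)}).Reachable a b := by
  intro a b hab
  obtain ⟨p⟩ := hab
  induction p with
  | nil => exact Reachable.refl _
  | @cons x y z h q ih =>
    refine Reachable.trans ?_ ih
    by_cases he : s(x, y) = s(v, w)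
    · rw [Sym2.eq_iff] at he
      rcases he with ⟨rfl, rfl⟩ | ⟨rfl, rfl⟩
      · exact hr
      · exact hr.symm
    · exact (SimpleGraph.deleteEdges_adj.mpr ⟨h, by simp [he]⟩).reachable

lemma conn_card_le {V : Type*} [Fintype V] :
    ∀ (n : ℕ) (G : SimpleGraph V) [Fintype G.edgeSet],
      G.edgeFinset.card = n → G.Connected → Fintype.card V ≤ n + 1 := by
  intro n
  induction n using Nat.strong_induction_on with
  | _ n ih =>
    intro G _ hcard hconn
    classical
    by_cases hac : G.IsAcyclic
    · have ht : G.IsTree := ⟨hconn, hac⟩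
      have := ht.card_edgeFinset
      omega
    · simp only [SimpleGraph.IsAcyclic, not_forall, not_not] at hac
      obtain ⟨v, c, hc⟩ := hac
      cases c with
      | nil => exact absurd hc (by simp [Walk.isCycle_def])
      | @cons _ b _ hadj q =>
        have hmem : s(v, b) ∈ (Walk.cons hadj q).edges := by simp
        have hnb : ¬ G.IsBridge s(v, b) := by
          rw [isBridge_iff_adj_and_forall_cycle_notMem]
          push_neg
          exact ⟨v, Walk.cons hadj q, hc, hmem⟩
          exact hadj
        have hreach : (G.deleteEdges {s(v, b)}).Reachable v b := by
          rw [isBridge_iff] at hnb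
          push_neg at hnb
          exact hnb
        set G' := G.deleteEdges {s(v, b)} with hG'
        haveI : Fintype G'.edgeSet := Set.Finite.fintype (Set.toFinite _)
        have hconn' : G'.Connected := by
          haveI := hconn.nonempty
          exact ⟨fun a b' => reach_del hreach (hconn a b')⟩
        have hsub : G'.edgeFinset = G.edgeFinset.erase s(v, b) := by
          ext e
          simp only [Set.mem_toFinset, Finset.mem_erase, SimpleGraph.mem_edgeFinset]
          rw [hG', edgeSet_deleteEdges]
          simp only [Set.mem_diff, Set.mem_singleton_iff, SimpleGraph.mem_edgeFinset]
          tauto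
        have hin : s(v, b) ∈ G.edgeFinset := by
          rw [SimpleGraph.mem_edgeFinset]; exact hadj
        have hcard' : G'.edgeFinset.card = n - 1 := by
          rw [hsub, Finset.card_erase_of_mem hin, hcard]
        have hn : 1 ≤ n := by
          rw [← hcard]; exact Finset.card_pos.mpr ⟨_, hin⟩
        have := ih (n-1) (by omega) G' hcard' hconn'
        omega

lemma isTree_of_conn_card {V : Type*} [Fintype V] (G : SimpleGraph V) [Fintype G.edgeSet]
    (hconn : G.Connected) (hc : G.edgeFinset.card + 1 ≤ Fintype.card V) : G.IsTree := by
  classical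
  refine ⟨hconn, ?_⟩
  by_contra hac
  simp only [SimpleGraph.IsAcyclic, not_forall, not_not] at hac
  obtain ⟨v, c, hcyc⟩ := hac
  cases c with
  | nil => exact absurd hcyc (by simp [Walk.isCycle_def])
  | @cons _ b _ hadj q =>
    have hmem : s(v, b) ∈ (Walk.cons hadj q).edges := by simp
    have hnb : ¬ G.IsBridge s(v, b) := by
      rw [isBridge_iff_adj_and_forall_cycle_notMem]
      push_neg
      exact ⟨v, Walk.cons hadj q, hcyc, hmem⟩
      exact hadj
    have hreach : (G.deleteEdges {s(v, b)}).Reachable v b := by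
      rw [isBridge_iff] at hnb
      push_neg at hnb
      exact hnb
    set G' := G.deleteEdges {s(v, b)} with hG'
    haveI : Fintype G'.edgeSet := Set.Finite.fintype (Set.toFinite _)
    haveI := hconn.nonempty
    have hconn' : G'.Connected := ⟨fun a b' => reach_del hreach (hconn a b')⟩
    have hsub : G'.edgeFinset = G.edgeFinset.erase s(v, b) := by
      ext e
      simp only [Set.mem_toFinset, Finset.mem_erase, SimpleGraph.mem_edgeFinset]
      rw [hG', edgeSet_deleteEdges]
      simp only [Set.mem_diff, Set.mem_singleton_iff, SimpleGraph.mem_edgeFinset]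
      tauto
    have hin : s(v, b) ∈ G.edgeFinset := by
      rw [SimpleGraph.mem_edgeFinset]; exact hadj
    have hcard' : G'.edgeFinset.card = G.edgeFinset.card - 1 := by
      rw [hsub, Finset.card_erase_of_mem hin]
    have h1 : 1 ≤ G.edgeFinset.card := Finset.card_pos.mpr ⟨_, hin⟩
    have := conn_card_le _ G' hcard' hconn'
    omega
lemma conc_mem_occSet (Θ : ProofStructure) {L : MLLLink} (hL : L ∈ Θ.links) {x : Occ}
    (hx : x ∈ L.concs) : x ∈ Θ.occSet := ⟨L, hL, Or.inl hx⟩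

lemma prem_mem_occSet (Θ : ProofStructure) {L : MLLLink} (hL : L ∈ Θ.links) {x : Occ}
    (hx : x ∈ L.prems) : x ∈ Θ.occSet := ⟨L, hL, Or.inr hx⟩

lemma occ_is_conc (Θ : ProofStructure) {x : Occ} (hx : x ∈ Θ.occSet) :
    ∃ L, L ∈ Θ.links ∧ x ∈ L.concs := by
  obtain ⟨L, hL, hx | hx⟩ := hx
  · exact ⟨L, hL, hx⟩
  · obtain ⟨K, hK, _, hxc⟩ := Θ.premIsConc L hL x hx
    exact ⟨K, hK, hxc⟩

/-- the unique link of which `x` is a conclusion -/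
noncomputable def linkOf (Θ : ProofStructure) (x : Occ) : MLLLink :=
  if h : ∃ L, L ∈ Θ.links ∧ x ∈ L.concs then h.choose else MLLLink.id 0 0

lemma linkOf_spec (Θ : ProofStructure) {x : Occ} (h : ∃ L, L ∈ Θ.links ∧ x ∈ L.concs) :
    linkOf Θ x ∈ Θ.links ∧ x ∈ (linkOf Θ x).concs := by
  rw [linkOf, dif_pos h]
  exact h.choose_spec

lemma linkOf_eq (Θ : ProofStructure) {x : Occ} {L : MLLLink} (hL : L ∈ Θ.links)
    (hx : x ∈ L.concs) : linkOf Θ x = L := by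
  have h : ∃ L, L ∈ Θ.links ∧ x ∈ L.concs := ⟨L, hL, hx⟩
  obtain ⟨h1, h2⟩ := linkOf_spec Θ h
  exact Θ.concUnique _ h1 L hL x h2 hx

lemma stepE_adj (Θ : ProofStructure) {L : MLLLink} (hL : L ∈ Θ.links) {e : Sym2 ℕ}
    (he : e ∈ stepE L) :
    ∃ x y : Occ, e = s(x, y) ∧ x ≠ y ∧ x ∈ Θ.occSet ∧ y ∈ Θ.occSet ∧
      drStep extremeLeft L x y := by
  have hnd := Θ.nodupLink L hL
  cases L with
  | id c1 c2 =>
    simp only [stepE, Finset.mem_singleton] at he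
    simp only [MLLLink.concs, MLLLink.prems, List.append_nil] at hnd
    have h12 : c1 ≠ c2 := by
      simp only [List.nodup_cons, List.mem_singleton] at hnd
      exact fun h => hnd.1 (by simp [h])
    exact ⟨c1, c2, he, h12, conc_mem_occSet Θ hL (by simp [MLLLink.concs]),
      conc_mem_occSet Θ hL (by simp [MLLLink.concs]), ⟨rfl, rfl⟩⟩
  | tensor l r c =>
    simp only [stepE, Finset.mem_insert, Finset.mem_singleton] at he
    simp only [MLLLink.concs, MLLLink.prems, List.singleton_append] at hnd
    have hcl : c ≠ l := by
      simp only [List.nodup_cons, List.mem_cons, List.mem_singleton] at hnd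
      exact fun h => hnd.1 (Or.inl h)
    have hcr : c ≠ r := by
      simp only [List.nodup_cons, List.mem_cons, List.mem_singleton] at hnd
      exact fun h => hnd.1 (Or.inr (by simp [h]))
    rcases he with rfl | rfl
    · exact ⟨l, c, rfl, fun h => hcl h.symm, prem_mem_occSet Θ hL (by simp [MLLLink.prems]),
        conc_mem_occSet Θ hL (by simp [MLLLink.concs]), Or.inl ⟨rfl, rfl⟩⟩
    · exact ⟨r, c, rfl, fun h => hcr h.symm, prem_mem_occSet Θ hL (by simp [MLLLink.prems]),
        conc_mem_occSet Θ hL (by simp [MLLLink.concs]), Or.inr ⟨rfl, rfl⟩⟩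
  | par l r c =>
    simp only [stepE, Finset.mem_singleton] at he
    simp only [MLLLink.concs, MLLLink.prems, List.singleton_append] at hnd
    have hcl : c ≠ l := by
      simp only [List.nodup_cons, List.mem_cons, List.mem_singleton] at hnd
      exact fun h => hnd.1 (Or.inl h)
    refine ⟨l, c, he, fun h => hcl h.symm, prem_mem_occSet Θ hL (by simp [MLLLink.prems]),
      conc_mem_occSet Θ hL (by simp [MLLLink.concs]), ?_⟩
    simp [drStep, extremeLeft]

lemma link_count (Θ : ProofStructure) {L : MLLLink} (hL : L ∈ Θ.links) :
    (relPrems L).toFinset.card + L.concs.toFinset.card = (stepE L).card + 1 := by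
  have hnd := Θ.nodupLink L hL
  cases L with
  | id c1 c2 =>
    simp only [MLLLink.concs, MLLLink.prems, List.append_nil] at hnd
    have h12 : c1 ≠ c2 := by
      simp only [List.nodup_cons, List.mem_singleton] at hnd
      exact fun h => hnd.1 (by simp [h])
    simp [relPrems, MLLLink.concs, stepE, List.toFinset_cons, Finset.card_insert_of_notMem,
      h12]
  | tensor l r c =>
    simp only [MLLLink.concs, MLLLink.prems, List.singleton_append] at hnd
    simp only [List.nodup_cons, List.mem_cons, List.mem_singleton] at hnd
    have hcl : c ≠ l := fun h => hnd.1 (Or.inl h)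
    have hcr : c ≠ r := fun h => hnd.1 (Or.inr (by simp [h]))
    have hlr : l ≠ r := fun h => hnd.2.1 (Or.inl h)
    have hse : s(l, c) ≠ s(r, c) := by
      intro h
      rw [Sym2.eq_iff] at h
      rcases h with ⟨h1, _⟩ | ⟨h1, h2⟩
      · exact hlr h1
      · exact hcl h1.symm
    simp [relPrems, MLLLink.concs, stepE, Finset.card_insert_of_notMem, hlr, hse]
  | par l r c =>
    simp [relPrems, MLLLink.concs, stepE]
/-- bundled translation data -/
structure TData (Θ : ProofStructure) (T : PreTree) where
  main : MLLLink → ℕ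
  aux : MLLLink → ℕ
  mainInj : ∀ L1 ∈ Θ.links, ∀ L2 ∈ Θ.links, main L1 = main L2 → L1 = L2
  auxInj : ∀ L1 L2, hasAux Θ L1 → hasAux Θ L2 → aux L1 = aux L2 → L1 = L2
  mainAux : ∀ L1 ∈ Θ.links, ∀ L2, hasAux Θ L2 → main L1 ≠ aux L2
  vSpec : ∀ v, v ∈ T.V ↔ ((∃ L ∈ Θ.links, v = main L) ∨ (∃ L, hasAux Θ L ∧ v = aux L))
  kindMain : ∀ L ∈ Θ.links, ¬ MLLLink.IsPar L →
      ∃ s, T.kind (main L) = DNodeKind.labeled s ∧ ∀ d, d ∈ s ↔ linkLabel Θ L d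
  kindPar : ∀ L ∈ Θ.links, MLLLink.IsPar L → T.kind (main L) = DNodeKind.par L
  kindAux : ∀ L, hasAux Θ L →
      ∃ s, T.kind (aux L) = DNodeKind.labeled s ∧ ∀ d, d ∈ s ↔ linkLabel Θ L d
  upperSpec : ∀ l r c, MLLLink.par l r c ∈ Θ.links →
      ∀ K ∈ Θ.links, l ∈ MLLLink.concs K →
        ∀ u, OutIs Θ main aux K u → T.upper (main (MLLLink.par l r c)) = some u
  edgeSpec : ∀ e, e ∈ T.edges ↔
      ∃ u v, e = s(u, v) ∧ (EdgeSpec Θ main aux u v ∨ EdgeSpec Θ main aux v u)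

lemma isTranslation_tdata {Θ : ProofStructure} {T : PreTree} (hT : IsTranslation Θ T) :
    Nonempty (TData Θ T) := by
  obtain ⟨-, main, aux, h1, h2, h3, h4, h5, h6, h7, h8, h9⟩ := hT
  exact ⟨⟨main, aux, h1, h2, h3, h4, h5, h6, h7, h8, h9⟩⟩

namespace TData

variable {Θ : ProofStructure} {T : PreTree} (td : TData Θ T)

/-- the outward connection node of a link -/
noncomputable def out (K : MLLLink) : ℕ :=
  letI := Classical.propDecidable (hasAux Θ K)
  if hasAux Θ K then td.aux K else td.main K

lemma out_is (K : MLLLink) : OutIs Θ td.main td.aux K (td.out K) := by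
  rw [out]
  by_cases h : hasAux Θ K
  · exact Or.inl ⟨h, by simp [h]⟩
  · exact Or.inr ⟨h, by simp [h]⟩

lemma outIs_eq {K : MLLLink} {u : ℕ} (h : OutIs Θ td.main td.aux K u) : u = td.out K := by
  rw [out]
  rcases h with ⟨h1, h2⟩ | ⟨h1, h2⟩ <;> simp [h1, h2]

lemma hasAux_mem {L : MLLLink} (h : hasAux Θ L) : L ∈ Θ.links := h.1

lemma main_mem {K : MLLLink} (hK : K ∈ Θ.links) : td.main K ∈ T.V :=
  (td.vSpec _).mpr (Or.inl ⟨K, hK, rfl⟩)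

lemma aux_mem {K : MLLLink} (hK : hasAux Θ K) : td.aux K ∈ T.V :=
  (td.vSpec _).mpr (Or.inr ⟨K, hK, rfl⟩)

lemma out_mem {K : MLLLink} (hK : K ∈ Θ.links) : td.out K ∈ T.V := by
  rw [out]
  by_cases h : hasAux Θ K <;> simp [h]
  · exact td.aux_mem h
  · exact td.main_mem hK

lemma out_ne_main {K M : MLLLink} (hK : K ∈ Θ.links) (hM : M ∈ Θ.links) (hne : K ≠ M) :
    td.out K ≠ td.main M := by
  rw [out]
  by_cases h : hasAux Θ K <;> simp [h]
  · exact fun he => td.mainAux M hM K h he.symm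
  · exact fun he => hne (td.mainInj K hK M hM he)

lemma main_ne_aux {L : MLLLink} (hL : hasAux Θ L) : td.main L ≠ td.aux L :=
  td.mainAux L hL.1 L hL

/-- translation edge from a link feeding a non-par link -/
lemma edge1 {x : Occ} {K M : MLLLink} (hK : K ∈ Θ.links) (hM : M ∈ Θ.links)
    (hxc : x ∈ K.concs) (hxp : x ∈ M.prems) (hnp : ¬ M.IsPar) :
    s(td.out K, td.main M) ∈ T.edges := by
  rw [td.edgeSpec]
  exact ⟨_, _, rfl, Or.inl (Or.inl ⟨x, K, M, hK, hM, hxc, hxp, hnp, td.out_is K, rfl⟩)⟩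

/-- translation edge from a link feeding the left premise of a par link -/
lemma edge2 {l r c : Occ} {K : MLLLink} (hK : K ∈ Θ.links)
    (hP : MLLLink.par l r c ∈ Θ.links) (hlc : l ∈ K.concs) :
    s(td.out K, td.main (MLLLink.par l r c)) ∈ T.edges := by
  rw [td.edgeSpec]
  exact ⟨_, _, rfl, Or.inl (Or.inr (Or.inl ⟨K, l, r, c, hK, hP, hlc, td.out_is K, rfl⟩))⟩

/-- translation edge from a par link to its auxiliary node -/
lemma edge3 {L : MLLLink} (hL : hasAux Θ L) : s(td.main L, td.aux L) ∈ T.edges := by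
  rw [td.edgeSpec]
  exact ⟨_, _, rfl, Or.inl (Or.inr (Or.inr ⟨L, hL, rfl, rfl⟩))⟩

lemma out_of_hasAux {L : MLLLink} (hL : hasAux Θ L) : td.out L = td.aux L := by
  rw [out]; simp [hL]

lemma out_of_not_hasAux {L : MLLLink} (hL : ¬ hasAux Θ L) : td.out L = td.main L := by
  rw [out]; simp [hL]

/-- analysis of a par-kinded vertex -/
lemma par_vertex {v : ℕ} {L : MLLLink} (hv : v ∈ T.V) (hk : T.kind v = DNodeKind.par L) :
    L ∈ Θ.links ∧ v = td.main L ∧ ∃ l r c, L = MLLLink.par l r c := by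
  rcases (td.vSpec v).mp hv with ⟨L', hL', rfl⟩ | ⟨L', hL', rfl⟩
  · by_cases hp : L'.IsPar
    · have := td.kindPar L' hL' hp
      rw [hk] at this
      cases this
      refine ⟨hL', rfl, ?_⟩
      cases L with
      | par l r c => exact ⟨l, r, c, rfl⟩
      | id c1 c2 => simp [MLLLink.IsPar] at hp
      | tensor l r c => simp [MLLLink.IsPar] at hp
    · obtain ⟨s, hs, -⟩ := td.kindMain L' hL' hp
      rw [hk] at hs
      cases hs
  · obtain ⟨s, hs, -⟩ := td.kindAux L' hL'
    rw [hk] at hs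
    cases hs

end TData
lemma feed_ne (Θ : ProofStructure) {K M : MLLLink} (hK : K ∈ Θ.links) {x : Occ}
    (hxc : x ∈ K.concs) (hxp : x ∈ M.prems) : K ≠ M := by
  rintro rfl
  exact conc_not_prem Θ hK hxc hxp

lemma l_mem_par_prems (l r c : Occ) : l ∈ (MLLLink.par l r c).prems := by
  simp [MLLLink.prems]

/-- the par links with auxiliary node -/
noncomputable def auxLinksF (Θ : ProofStructure) : Finset MLLLink :=
  letI := Classical.decPred (hasAux Θ)
  Θ.links.filter (hasAux Θ)

lemma mem_auxLinksF {Θ : ProofStructure} {L : MLLLink} :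
    L ∈ auxLinksF Θ ↔ hasAux Θ L := by
  rw [auxLinksF]
  letI := Classical.decPred (hasAux Θ)
  rw [Finset.mem_filter]
  exact ⟨fun h => h.2, fun h => ⟨h.1, h⟩⟩

namespace TData

variable {Θ : ProofStructure} {T : PreTree}

/-- analysis of an `EdgeSpec` edge -/
lemma edgeSpec_props (td : TData Θ T) {u v : ℕ} (h : EdgeSpec Θ td.main td.aux u v) :
    u ∈ T.V ∧ v ∈ T.V ∧ u ≠ v := by
  rcases h with ⟨x, K, M, hK, hM, hxc, hxp, hnp, hout, rfl⟩ |
    ⟨K, l, r, c, hK, hP, hlc, hout, rfl⟩ | ⟨L, hL, rfl, rfl⟩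
  · obtain rfl := td.outIs_eq hout
    exact ⟨td.out_mem hK, td.main_mem hM,
      td.out_ne_main hK hM (feed_ne Θ hK hxc hxp)⟩
  · obtain rfl := td.outIs_eq hout
    exact ⟨td.out_mem hK, td.main_mem hP,
      td.out_ne_main hK hP (feed_ne Θ hK hlc (l_mem_par_prems l r c))⟩
  · exact ⟨td.main_mem hL.1, td.aux_mem hL, td.main_ne_aux hL⟩

/-- all edges of T have distinct endpoints in T.V -/
lemma edge_endpoints (td : TData Θ T) {e : Sym2 ℕ} (he : e ∈ T.edges) :
    ∃ u v, e = s(u, v) ∧ u ∈ T.V ∧ v ∈ T.V ∧ u ≠ v := by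
  rw [td.edgeSpec] at he
  obtain ⟨u, v, rfl, h | h⟩ := he
  · obtain ⟨h1, h2, h3⟩ := td.edgeSpec_props h
    exact ⟨u, v, rfl, h1, h2, h3⟩
  · obtain ⟨h1, h2, h3⟩ := td.edgeSpec_props h
    exact ⟨u, v, rfl, h2, h1, fun hh => h3 hh.symm⟩

/-- the covering finset of translation edges -/
noncomputable def B (td : TData Θ T) : Finset (Sym2 ℕ) :=
  (Θ.links.biUnion fun M =>
    (relPrems M).toFinset.image fun x => s(td.out (linkOf Θ x), td.main M)) ∪
  ((auxLinksF Θ).image fun L => s(td.main L, td.aux L))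

lemma edgeSpec_mem_B (td : TData Θ T) {u v : ℕ} (h : EdgeSpec Θ td.main td.aux u v) : s(u, v) ∈ td.B := by
  rcases h with ⟨x, K, M, hK, hM, hxc, hxp, hnp, hout, rfl⟩ |
    ⟨K, l, r, c, hK, hP, hlc, hout, rfl⟩ | ⟨L, hL, rfl, rfl⟩
  · obtain rfl := td.outIs_eq hout
    refine Finset.mem_union_left _ (Finset.mem_biUnion.mpr ⟨M, hM, ?_⟩)
    refine Finset.mem_image.mpr ⟨x, ?_, ?_⟩
    · rw [List.mem_toFinset]
      cases M with
      | id c1 c2 => simp [MLLLink.prems] at hxp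
      | tensor l' r' c' => simpa [relPrems, MLLLink.prems] using hxp
      | par l' r' c' => simp [MLLLink.IsPar] at hnp
    · rw [linkOf_eq Θ hK hxc]
  · obtain rfl := td.outIs_eq hout
    refine Finset.mem_union_left _ (Finset.mem_biUnion.mpr ⟨MLLLink.par l r c, hP, ?_⟩)
    refine Finset.mem_image.mpr ⟨l, by simp [relPrems], ?_⟩
    rw [linkOf_eq Θ hK hlc]
  · exact Finset.mem_union_right _
      (Finset.mem_image.mpr ⟨L, mem_auxLinksF.mpr hL, rfl⟩)

lemma edges_subset_B (td : TData Θ T) : T.edges ⊆ td.B := by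
  intro e he
  rw [td.edgeSpec] at he
  obtain ⟨u, v, rfl, h | h⟩ := he
  · exact td.edgeSpec_mem_B h
  · rw [Sym2.eq_swap]
    exact td.edgeSpec_mem_B h

lemma card_B_le (td : TData Θ T) :
    td.B.card ≤ (∑ M ∈ Θ.links, (relPrems M).toFinset.card) + (auxLinksF Θ).card := by
  refine le_trans (Finset.card_union_le _ _) (Nat.add_le_add ?_ ?_)
  · refine le_trans (Finset.card_biUnion_le) (Finset.sum_le_sum ?_)
    intro M _
    exact Finset.card_image_le
  · exact Finset.card_image_le

lemma card_V_ge (td : TData Θ T) : Θ.links.card + (auxLinksF Θ).card ≤ T.V.card := by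
  have hsub : (Θ.links.image td.main) ∪ ((auxLinksF Θ).image td.aux) ⊆ T.V := by
    intro v hv
    rcases Finset.mem_union.mp hv with h | h
    · obtain ⟨L, hL, rfl⟩ := Finset.mem_image.mp h
      exact td.main_mem hL
    · obtain ⟨L, hL, rfl⟩ := Finset.mem_image.mp h
      exact td.aux_mem (mem_auxLinksF.mp hL)
  have hdisj : Disjoint (Θ.links.image td.main) ((auxLinksF Θ).image td.aux) := by
    rw [Finset.disjoint_left]
    rintro v hv hv'
    obtain ⟨L, hL, rfl⟩ := Finset.mem_image.mp hv
    obtain ⟨L', hL', heq⟩ := Finset.mem_image.mp hv'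
    exact td.mainAux L hL L' (mem_auxLinksF.mp hL') heq.symm
  have h1 : (Θ.links.image td.main).card = Θ.links.card :=
    Finset.card_image_of_injOn fun L1 h1 L2 h2 h => td.mainInj L1 h1 L2 h2 h
  have h2 : ((auxLinksF Θ).image td.aux).card = (auxLinksF Θ).card :=
    Finset.card_image_of_injOn fun L1 h1 L2 h2 h =>
      td.auxInj L1 L2 (mem_auxLinksF.mp h1) (mem_auxLinksF.mp h2) h
  calc Θ.links.card + (auxLinksF Θ).card
      = ((Θ.links.image td.main) ∪ ((auxLinksF Θ).image td.aux)).card := by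
        rw [Finset.card_union_of_disjoint hdisj, h1, h2]
    _ ≤ T.V.card := Finset.card_le_card hsub

end TData
lemma sum_relPrems_lt (Θ : ProofStructure) (hdr : DRTreeL Θ) :
    (∑ L ∈ Θ.links, (relPrems L).toFinset.card) + 1 ≤ Θ.links.card := by
  classical
  set C : Finset ℕ := Θ.links.biUnion (fun L => L.concs.toFinset) with hC
  have hCeq : Θ.occSet = ↑C := by
    ext x
    constructor
    · intro hx
      obtain ⟨L, hL, hc⟩ := occ_is_conc Θ hx
      exact Finset.mem_coe.mpr (Finset.mem_biUnion.mpr ⟨L, hL, List.mem_toFinset.mpr hc⟩)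
    · intro hx
      obtain ⟨L, hL, hc⟩ := Finset.mem_biUnion.mp (Finset.mem_coe.mp hx)
      exact conc_mem_occSet Θ hL (List.mem_toFinset.mp hc)
  haveI : Fintype ↥Θ.occSet := Set.Finite.fintype (by rw [hCeq]; exact C.finite_toSet)
  set GDR := (DRGraphL Θ).induce Θ.occSet with hGDR
  haveI : Fintype GDR.edgeSet := Set.Finite.fintype (Set.toFinite _)
  have hEq : GDR.edgeFinset.card + 1 = Fintype.card ↥Θ.occSet := hdr.card_edgeFinset
  -- the DR step edges
  set D : Finset (Sym2 ℕ) := Θ.links.biUnion stepE with hD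
  have hDcard : D.card = ∑ L ∈ Θ.links, (stepE L).card :=
    Finset.card_biUnion (fun K hK M hM hne => stepE_disjoint Θ hK hM hne)
  have hDsub : D ⊆ GDR.edgeFinset.image (Sym2.map Subtype.val) := by
    intro e he
    obtain ⟨L, hL, heL⟩ := Finset.mem_biUnion.mp he
    obtain ⟨x, y, rfl, hne, hx, hy, hstep⟩ := stepE_adj Θ hL heL
    refine Finset.mem_image.mpr ⟨s((⟨x, hx⟩ : Θ.occSet), (⟨y, hy⟩ : Θ.occSet)), ?_, rfl⟩
    rw [SimpleGraph.mem_edgeFinset, SimpleGraph.mem_edgeSet]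
    exact ⟨hne, L, hL, Or.inl hstep⟩
  have hDle : D.card ≤ GDR.edgeFinset.card :=
    le_trans (Finset.card_le_card hDsub) Finset.card_image_le
  have hOcc : Fintype.card ↥Θ.occSet ≤ ∑ L ∈ Θ.links, L.concs.toFinset.card := by
    have h1 : Θ.occSet.toFinset = C := by
      ext x
      rw [Set.mem_toFinset, hCeq, Finset.mem_coe]
    calc Fintype.card ↥Θ.occSet = Θ.occSet.toFinset.card := (Set.toFinset_card _).symm
      _ = C.card := by rw [h1]
      _ ≤ ∑ L ∈ Θ.links, L.concs.toFinset.card := Finset.card_biUnion_le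
  have hsum : (∑ L ∈ Θ.links, (relPrems L).toFinset.card) +
      (∑ L ∈ Θ.links, L.concs.toFinset.card) =
      (∑ L ∈ Θ.links, (stepE L).card) + Θ.links.card := by
    rw [← Finset.sum_add_distrib]
    rw [Finset.sum_congr rfl (fun L hL => link_count Θ hL)]
    rw [Finset.sum_add_distrib, Finset.sum_const, smul_eq_mul, mul_one]
  omega
def firstConc : MLLLink → Occ
  | .id c1 _ => c1
  | .tensor _ _ c => c
  | .par _ _ c => c

lemma firstConc_mem (L : MLLLink) : firstConc L ∈ L.concs := by
  cases L <;> simp [firstConc, MLLLink.concs]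

namespace TData

variable {Θ : ProofStructure} {T : PreTree}

/-- the induced translation graph -/
abbrev GT (td : TData Θ T) : SimpleGraph ↥(↑T.V : Set ℕ) :=
  T.graph.induce (↑T.V : Set ℕ)

lemma gt_adj (td : TData Θ T) {u v : ℕ} (hu : u ∈ T.V) (hv : v ∈ T.V) (hne : u ≠ v)
    (he : s(u, v) ∈ T.edges) :
    td.GT.Adj ⟨u, hu⟩ ⟨v, hv⟩ := ⟨hne, he⟩

lemma reach_out_main (td : TData Θ T) {L : MLLLink} (hL : L ∈ Θ.links) :
    td.GT.Reachable ⟨td.out L, td.out_mem hL⟩ ⟨td.main L, td.main_mem hL⟩ := by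
  by_cases h : hasAux Θ L
  · have he := td.edge3 h
    have hadj := td.gt_adj (td.main_mem hL) (td.aux_mem h) (td.main_ne_aux h) he
    have heq : (⟨td.out L, td.out_mem hL⟩ : ↥(↑T.V : Set ℕ)) = ⟨td.aux L, td.aux_mem h⟩ :=
      Subtype.ext (td.out_of_hasAux h)
    rw [heq]
    exact hadj.symm.reachable
  · have heq : (⟨td.out L, td.out_mem hL⟩ : ↥(↑T.V : Set ℕ)) = ⟨td.main L, td.main_mem hL⟩ :=
      Subtype.ext (td.out_of_not_hasAux h)
    rw [heq]

/-- canonical vertex of the translation attached to an occurrence -/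
noncomputable def anchor (td : TData Θ T) (x : Occ) (hx : x ∈ Θ.occSet) : ↥(↑T.V : Set ℕ) :=
  ⟨td.out (linkOf Θ x), td.out_mem (linkOf_spec Θ (occ_is_conc Θ hx)).1⟩

lemma anchor_eq (td : TData Θ T) {x : Occ} (hx : x ∈ Θ.occSet) {L : MLLLink}
    (hL : L ∈ Θ.links) (hc : x ∈ L.concs) :
    td.anchor x hx = ⟨td.out L, td.out_mem hL⟩ := by
  apply Subtype.ext
  show td.out (linkOf Θ x) = td.out L
  rw [linkOf_eq Θ hL hc]

lemma prem_step (td : TData Θ T) {M : MLLLink} (hM : M ∈ Θ.links) {x y : Occ}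
    (hrel : x ∈ relPrems M) (hyc : y ∈ M.concs)
    (hx : x ∈ Θ.occSet) (hy : y ∈ Θ.occSet) :
    td.GT.Reachable (td.anchor x hx) (td.anchor y hy) := by
  obtain ⟨hKmem, hKc⟩ := linkOf_spec Θ (occ_is_conc Θ hx)
  set K := linkOf Θ x with hK
  have hxp : x ∈ M.prems := by
    cases M <;> simp only [relPrems, MLLLink.prems, List.mem_cons, List.mem_singleton,
      List.not_mem_nil] at hrel ⊢ <;> tauto
  have hKne : K ≠ M := feed_ne Θ hKmem hKc hxp
  have he : s(td.out K, td.main M) ∈ T.edges := by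
    cases M with
    | id c1 c2 => simp [relPrems] at hrel
    | tensor l r c => exact td.edge1 hKmem hM hKc hxp (by simp [MLLLink.IsPar])
    | par l r c =>
      have hxl : x = l := by simpa [relPrems] using hrel
      subst hxl
      exact td.edge2 hKmem hM hKc
  have hadj := td.gt_adj (td.out_mem hKmem) (td.main_mem hM)
    (td.out_ne_main hKmem hM hKne) he
  rw [td.anchor_eq hy hM hyc]
  exact hadj.reachable.trans (td.reach_out_main hM).symm

lemma step_lift (td : TData Θ T) {L : MLLLink} (hL : L ∈ Θ.links) {x y : Occ}
    (h : drStep extremeLeft L x y) (hx : x ∈ Θ.occSet) (hy : y ∈ Θ.occSet) :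
    td.GT.Reachable (td.anchor x hx) (td.anchor y hy) := by
  cases L with
  | id c1 c2 =>
    obtain ⟨rfl, rfl⟩ := h
    rw [td.anchor_eq hx hL (by simp [MLLLink.concs]),
      td.anchor_eq hy hL (by simp [MLLLink.concs])]
  | tensor l r c =>
    have hrel : x ∈ relPrems (MLLLink.tensor l r c) := by
      rcases h with ⟨h1, _⟩ | ⟨h1, _⟩ <;> rw [h1] <;> simp [relPrems]
    have hyc : y ∈ (MLLLink.tensor l r c).concs := by
      rcases h with ⟨_, h2⟩ | ⟨_, h2⟩ <;> rw [h2] <;> simp [MLLLink.concs]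
    exact td.prem_step hL hrel hyc hx hy
  | par l r c =>
    simp only [drStep, extremeLeft, Bool.false_eq_true, if_neg, ite_false] at h
    obtain ⟨rfl, rfl⟩ := h
    exact td.prem_step hL (by simp [relPrems]) (by simp [MLLLink.concs]) hx hy

lemma adj_lift (td : TData Θ T) {x y : Occ} (hx : x ∈ Θ.occSet) (hy : y ∈ Θ.occSet)
    (h : (DRGraphL Θ).Adj x y) :
    td.GT.Reachable (td.anchor x hx) (td.anchor y hy) := by
  obtain ⟨hne, L, hL, hs | hs⟩ := h
  · exact td.step_lift hL hs hx hy
  · exact (td.step_lift hL hs hy hx).symm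

lemma reach_lift (td : TData Θ T) (x y : ↥Θ.occSet)
    (h : ((DRGraphL Θ).induce Θ.occSet).Reachable x y) :
    td.GT.Reachable (td.anchor ↑x x.2) (td.anchor ↑y y.2) := by
  obtain ⟨p⟩ := h
  induction p with
  | nil => exact Reachable.refl _
  | @cons a b cc hab q ih =>
    exact (td.adj_lift a.2 b.2 hab).trans ih

lemma vertex_anchor (td : TData Θ T) (v : ↥(↑T.V : Set ℕ)) :
    ∃ (x : Occ) (hx : x ∈ Θ.occSet), td.GT.Reachable v (td.anchor x hx) := by
  have hv : (v : ℕ) ∈ T.V := v.2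
  rcases (td.vSpec _).mp hv with ⟨L, hL, hveq⟩ | ⟨L, hL, hveq⟩
  · refine ⟨firstConc L, conc_mem_occSet Θ hL (firstConc_mem L), ?_⟩
    rw [td.anchor_eq _ hL (firstConc_mem L)]
    have : v = ⟨td.main L, td.main_mem hL⟩ := Subtype.ext hveq
    rw [this]
    exact (td.reach_out_main hL).symm
  · refine ⟨firstConc L, conc_mem_occSet Θ (hL.1) (firstConc_mem L), ?_⟩
    rw [td.anchor_eq _ (hL.1) (firstConc_mem L)]
    have : v = ⟨td.out L, td.out_mem (hL.1)⟩ := by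
      apply Subtype.ext
      show (v : ℕ) = td.out L
      rw [td.out_of_hasAux hL]
      exact hveq
    rw [this]

lemma gt_connected (td : TData Θ T) (hdr : DRTreeL Θ) : td.GT.Connected := by
  have hdrc := hdr.isConnected
  have hpre : td.GT.Preconnected := by
    intro u v
    obtain ⟨x, hx, hux⟩ := td.vertex_anchor u
    obtain ⟨y, hy, hvy⟩ := td.vertex_anchor v
    have hdre := hdrc.preconnected ⟨x, hx⟩ ⟨y, hy⟩
    exact hux.trans ((td.reach_lift ⟨x, hx⟩ ⟨y, hy⟩ hdre).trans hvy.symm)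
  haveI : Nonempty ↥(↑T.V : Set ℕ) := by
    obtain ⟨x⟩ := hdrc.nonempty
    obtain ⟨L, hL, hc⟩ := occ_is_conc Θ x.2
    exact ⟨⟨td.main L, td.main_mem hL⟩⟩
  exact ⟨hpre⟩

end TData
namespace TData

variable {Θ : ProofStructure} {T : PreTree}

lemma gt_isTree (td : TData Θ T) (hdr : DRTreeL Θ) : td.GT.IsTree := by
  classical
  letI : Fintype ↥(↑T.V : Set ℕ) := Finset.Subtype.fintype T.V
  haveI : Fintype td.GT.edgeSet := Set.Finite.fintype (Set.toFinite _)
  refine isTree_of_conn_card _ (td.gt_connected hdr) ?_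
  have hinj : Function.Injective (Sym2.map (Subtype.val : ↥(↑T.V : Set ℕ) → ℕ)) :=
    Sym2.map.injective Subtype.val_injective
  have himg : td.GT.edgeFinset.image (Sym2.map Subtype.val) ⊆ T.edges := by
    intro e he
    obtain ⟨e', he', rfl⟩ := Finset.mem_image.mp he
    revert he'
    refine Sym2.ind (fun u v he' => ?_) e'
    rw [SimpleGraph.mem_edgeFinset, SimpleGraph.mem_edgeSet] at he'
    exact he'.2
  have h1 : td.GT.edgeFinset.card ≤ T.edges.card := by
    rw [← Finset.card_image_of_injective _ hinj]
    exact Finset.card_le_card himg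
  have h2 : T.edges.card ≤ td.B.card := Finset.card_le_card (td.edges_subset_B)
  have h3 := td.card_B_le
  have h4 := sum_relPrems_lt Θ hdr
  have h5 := td.card_V_ge
  have h6 : Fintype.card ↥(↑T.V : Set ℕ) = T.V.card := Fintype.card_coe T.V
  omega

end TData
namespace TData

variable {Θ : ProofStructure} {T : PreTree}

lemma c_mem_par_concs (l r c : Occ) : c ∈ (MLLLink.par l r c).concs := by
  simp [MLLLink.concs]

lemma par_node_ok (td : TData Θ T) {v : ℕ} (hv : v ∈ T.V) {L : MLLLink}
    (hk : T.kind v = DNodeKind.par L) :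
    (∃ u ∈ T.V, T.upper v = some u ∧ s(v, u) ∈ T.edges) ∧
      1 ≤ T.degree v ∧ T.degree v ≤ 2 := by
  classical
  obtain ⟨hL, hveq, l, r, c, hshape⟩ := td.par_vertex hv hk
  subst hshape
  subst hveq
  set P := MLLLink.par l r c with hP
  -- the link feeding the left premise
  obtain ⟨K₀, hK₀, hK₀ne, hK₀c⟩ := Θ.premIsConc P hL l (l_mem_par_prems l r c)
  have hup : T.upper (td.main P) = some (td.out K₀) :=
    td.upperSpec l r c hL K₀ hK₀ hK₀c (td.out K₀) (td.out_is K₀)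
  have heup : s(td.out K₀, td.main P) ∈ T.edges := td.edge2 hK₀ hL hK₀c
  set eUp : Sym2 ℕ := s(td.out K₀, td.main P) with heUp
  -- the downward edge (if any)
  set eDown : Sym2 ℕ :=
    if hA : hasAux Θ P then s(td.main P, td.aux P)
    else if h2 : ∃ M, M ∈ Θ.links ∧ c ∈ M.prems then s(td.main P, td.main h2.choose)
    else eUp with heDown
  -- the case analysis for edges at the par node
  have claim : ∀ u' v', EdgeSpec Θ td.main td.aux u' v' →
      (td.main P = u' ∨ td.main P = v') → s(u', v') = eUp ∨ s(u', v') = eDown := by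
    intro u' v' hES hmem
    rcases hES with ⟨x, K, M, hK, hM, hxc, hxp, hnp, hout, rfl⟩ |
      ⟨K, l', r', c', hK, hPar, hlc, hout, rfl⟩ | ⟨L', hA', rfl, rfl⟩
    · -- feeding a non-par link
      obtain rfl := td.outIs_eq hout
      rcases hmem with hmu | hmv
      · -- main P = out K
        by_cases hAK : hasAux Θ K
        · rw [td.out_of_hasAux hAK] at hmu
          exact absurd hmu (td.mainAux P hL K hAK)
        · rw [td.out_of_not_hasAux hAK] at hmu
          obtain rfl := td.mainInj P hL K hK hmu
          have hxc' : x = c := by simpa [hP, MLLLink.concs] using hxc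
          subst hxc'
          have hA : ¬ hasAux Θ P := hAK
          have h2 : ∃ M', M' ∈ Θ.links ∧ x ∈ M'.prems := ⟨M, hM, hxp⟩
          right
          rw [heDown, dif_neg hA, dif_pos h2]
          have := Θ.premUnique M hM h2.choose h2.choose_spec.1 x hxp h2.choose_spec.2
          rw [← this, td.out_of_not_hasAux hAK]
      · -- main P = main M : M would be P, but M is not a par link
        obtain rfl := td.mainInj P hL M hM hmv
        simp [hP, MLLLink.IsPar] at hnp
    · -- feeding the left premise of a par link
      obtain rfl := td.outIs_eq hout
      rcases hmem with hmu | hmv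
      · -- main P = out K : K = P with no aux, but then c is premise of a par link
        by_cases hAK : hasAux Θ K
        · rw [td.out_of_hasAux hAK] at hmu
          exact absurd hmu (td.mainAux P hL K hAK)
        · rw [td.out_of_not_hasAux hAK] at hmu
          obtain rfl := td.mainInj P hL K hK hmu
          have hxc' : l' = c := by simpa [hP, MLLLink.concs] using hlc
          exact absurd ⟨hL, l, r, c, rfl,
            ⟨MLLLink.par l' r' c', Or.inl ⟨hPar, r', c', by rw [hxc']⟩⟩⟩ hAK
      · -- main P = main (par l' r' c') : this is the upper edge
        have hPP := td.mainInj P hL _ hPar hmv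
        rw [hP] at hPP
        obtain ⟨rfl, rfl, rfl⟩ : l = l' ∧ r = r' ∧ c = c' := by
          simpa [MLLLink.par.injEq] using hPP
        obtain rfl : K = K₀ := Θ.concUnique K hK K₀ hK₀ l hlc hK₀c
        left
        rfl
    · -- the auxiliary edge
      rcases hmem with hmu | hmv
      · obtain rfl := td.mainInj P hL L' hA'.1 hmu
        right
        rw [heDown, dif_pos hA']
      · exact absurd hmv (td.mainAux P hL L' hA')
  have hfilter : T.edges.filter (fun e => td.main P ∈ e) ⊆ {eUp, eDown} := by
    intro e he
    rw [Finset.mem_filter] at he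
    obtain ⟨he1, he2⟩ := he
    rw [td.edgeSpec] at he1
    obtain ⟨u', v', rfl, hes | hes⟩ := he1
    · have hm : td.main P = u' ∨ td.main P = v' := by
        rwa [Sym2.mem_iff] at he2
      rcases claim u' v' hes hm with h | h <;> simp [h]
    · have hm : td.main P = v' ∨ td.main P = u' := by
        rw [Sym2.mem_iff] at he2
        tauto
      rw [Sym2.eq_swap]
      rcases claim v' u' hes hm with h | h <;> simp [h]
  constructor
  · exact ⟨td.out K₀, td.out_mem hK₀, hup, by rw [Sym2.eq_swap]; exact heup⟩
  constructor
  · rw [PreTree.degree]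
    refine Finset.card_pos.mpr ⟨eUp, ?_⟩
    rw [Finset.mem_filter]
    exact ⟨heup, by rw [heUp, Sym2.mem_iff]; right; rfl⟩
  · rw [PreTree.degree]
    calc (T.edges.filter (fun e => td.main P ∈ e)).card
        ≤ ({eUp, eDown} : Finset (Sym2 ℕ)).card := Finset.card_le_card hfilter
      _ ≤ 2 := Finset.card_insert_le _ _ |>.trans (by simp)
end TData
/-- Let Θ be an MLL proof structure such that S_∀ℓ(Θ) is a tree and the
translation T(Θ) is defined.  Then T(Θ) is a deNM-tree; in particular the graph produced
by the translation is a finite tree. -/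
theorem translation_is_deNM_tree (Θ : ProofStructure) (hdef : TransDefined Θ)
    (T : PreTree) (hT : IsTranslation Θ T) :
    T.IsDeNMTree := by
  obtain ⟨td⟩ := isTranslation_tdata hT
  refine ⟨?_, ?_, ?_, ?_⟩
  · intro e he x hx
    obtain ⟨u, v, rfl, hu, hv, hne⟩ := td.edge_endpoints he
    rw [Sym2.mem_iff] at hx
    rcases hx with rfl | rfl <;> assumption
  · intro e he
    obtain ⟨u, v, rfl, hu, hv, hne⟩ := td.edge_endpoints he
    rw [Sym2.mk_isDiag_iff]
    exact hne
  · exact td.gt_isTree hdef.1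
  · intro v hv L hk
    exact td.par_node_ok hv hk
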